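/- arXiv:1503.06172 — 2 statements merged into one kernel-verified Lean document; each statement's English description precedes it below -/
import Mathlib

section
/- For each k ≥ 0, the exponential generating function of J^k_n satisfies ∑_{n≥0} J^k_n x^n/n! = 1/(2 − e^x)^{k+1}, as an identity of formal power series over ℚ, where J^k_n = ∑_{s=0}^{n} S(n,s)·s!·C(k+s,s). -/
/-- Stirling numbers of the second kind. -/
def stirling : ℕ → ℕ → ℕ
  | 0, 0 => 1
  | 0, _ + 1 => 0
  | _ + 1, 0 => 0
  | n + 1, s + 1 => (s + 1) * stirling n (s + 1) + stirling n s

/-- `J k n`: the number of barred preferential arrangements of an `n`-set with `k` bars,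
given by its closed form `∑ S(n,s)·s!·C(k+s,s)`. -/
def J (k n : ℕ) : ℕ :=
  ∑ s ∈ Finset.range (n + 1), stirling n s * s.factorial * (k + s).choose s

open Finset

lemma stirling_zero_right (n : ℕ) : stirling n 0 = if n = 0 then 1 else 0 := by
  cases n <;> rfl

lemma stirling_eq_zero : ∀ {n s : ℕ}, n < s → stirling n s = 0
  | 0, 0, h => absurd h (lt_irrefl _)
  | 0, s+1, _ => rfl
  | n+1, 0, h => by omega
  | n+1, s+1, h => by
      have h1 : n < s + 1 := by omega
      have h2 : n < s := by omega
      simp [stirling, stirling_eq_zero h1, stirling_eq_zero h2]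

lemma stirling_binom : ∀ n s : ℕ,
    ∑ m ∈ range (n+1), n.choose m * stirling m s = stirling (n+1) (s+1) := by
  intro n
  induction n with
  | zero => intro s; cases s <;> simp [stirling]
  | succ n ih =>
    intro s
    have piece2 : stirling 0 s + ∑ m ∈ range (n+1), n.choose (m+1) * stirling (m+1) s
        = stirling (n+1) (s+1) := by
      have := ih s
      rw [← this]
      have h1 : ∑ m ∈ range (n+2), n.choose m * stirling m s
          = ∑ m ∈ range (n+1), n.choose m * stirling m s := by
        rw [Finset.sum_range_succ, Nat.choose_succ_self, zero_mul, add_zero]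
      rw [← h1]
      conv_rhs => rw [Finset.sum_range_succ']
      rw [Nat.choose_zero_right, one_mul, add_comm]
    have step : ∑ m ∈ range (n+2), (n+1).choose m * stirling m s
        = (∑ m ∈ range (n+1), n.choose m * stirling (m+1) s) + stirling (n+1) (s+1) := by
      rw [Finset.sum_range_succ']
      simp only [Nat.choose_succ_succ, add_mul, Finset.sum_add_distrib, Nat.choose_zero_right,
        one_mul]
      rw [← piece2]
      ring
    rw [step]
    cases s with
    | zero =>
      have : ∀ m ∈ range (n+1), n.choose m * stirling (m+1) 0 = 0 := by
        intro m _; simp [stirling]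
      rw [Finset.sum_eq_zero this]
      show 0 + stirling (n+1) 1 = stirling (n+2) 1
      have : stirling (n+2) 1 = 1 * stirling (n+1) 1 + stirling (n+1) 0 := rfl
      simp [this, stirling_zero_right]
    | succ t =>
      have expand : ∀ m ∈ range (n+1), n.choose m * stirling (m+1) (t+1)
          = (t+1) * (n.choose m * stirling m (t+1)) + n.choose m * stirling m t := by
        intro m _
        show n.choose m * ((t+1) * stirling m (t+1) + stirling m t) = _
        ring
      rw [Finset.sum_congr rfl expand, Finset.sum_add_distrib, ← Finset.mul_sum, ih, ih]
      show (t+1) * stirling (n+1) (t+2) + stirling (n+1) (t+1) + stirling (n+1) (t+2)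
          = (t+2) * stirling (n+1) (t+2) + stirling (n+1) (t+1)
      ring

/-- `P k n` : the "previous" sequence, equal to `J (k-1) n` for `k ≥ 1`. -/
def P (k n : ℕ) : ℕ :=
  ∑ s ∈ Finset.range (n + 1), stirling n s * s.factorial * (k + s - 1).choose s

lemma P_succ (k n : ℕ) : P (k+1) n = J k n := by
  unfold P J
  refine Finset.sum_congr rfl fun s _ => ?_
  have h : k + 1 + s - 1 = k + s := by omega
  rw [h]

lemma P_zero (n : ℕ) : P 0 n = if n = 0 then 1 else 0 := by
  unfold P
  rw [Finset.sum_range_succ']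
  have : ∀ t ∈ range n, stirling n (t+1) * (t+1).factorial * (0 + (t+1) - 1).choose (t+1) = 0 := by
    intro t _
    have h1 : 0 + (t+1) - 1 = t := by omega
    rw [h1, Nat.choose_eq_zero_of_lt (by omega), mul_zero]
  rw [Finset.sum_eq_zero this]
  simp [stirling_zero_right]

/-- swap : `∑ C(n,m) J k m = ∑ S(n+1,s+1) s! C(k+s,s)` -/
lemma swap_sum (k n : ℕ) :
    ∑ m ∈ range (n+1), n.choose m * J k m
      = ∑ s ∈ range (n+1), stirling (n+1) (s+1) * s.factorial * (k+s).choose s := by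
  have extend : ∀ m ∈ range (n+1),
      n.choose m * J k m
        = ∑ s ∈ range (n+1), n.choose m * (stirling m s * s.factorial * (k+s).choose s) := by
    intro m hm
    rw [Finset.mem_range] at hm
    unfold J
    rw [Finset.mul_sum]
    refine Finset.sum_subset ?_ ?_
    · intro s hs
      rw [Finset.mem_range] at hs ⊢
      omega
    · intro s _ hs
      rw [Finset.mem_range, not_lt] at hs
      rw [stirling_eq_zero (by omega : m < s)]
      simp
  rw [Finset.sum_congr rfl extend, Finset.sum_comm]
  refine Finset.sum_congr rfl fun s _ => ?_
  have : ∑ m ∈ range (n+1), n.choose m * (stirling m s * s.factorial * (k+s).choose s)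
      = (∑ m ∈ range (n+1), n.choose m * stirling m s) * (s.factorial * (k+s).choose s) := by
    rw [Finset.sum_mul]
    exact Finset.sum_congr rfl fun m _ => by ring
  rw [this, stirling_binom]
  ring

/-- B + P = J -/
lemma BP (k n : ℕ) :
    (∑ s ∈ range (n+1), stirling n (s+1) * (s+1).factorial * (k+s).choose s) + P k n
      = J k n := by
  have hB : ∑ s ∈ range (n+1), stirling n (s+1) * (s+1).factorial * (k+s).choose s
      = ∑ s ∈ range n, stirling n (s+1) * (s+1).factorial * (k+s).choose s := by
    rw [Finset.sum_range_succ, stirling_eq_zero (by omega : n < n+1)]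
    simp
  have hP : P k n
      = (∑ t ∈ range n, stirling n (t+1) * (t+1).factorial * (k+t).choose (t+1))
        + stirling n 0 := by
    unfold P
    rw [Finset.sum_range_succ']
    have h1 : ∀ t ∈ range n,
        stirling n (t+1) * (t+1).factorial * (k+(t+1)-1).choose (t+1)
          = stirling n (t+1) * (t+1).factorial * (k+t).choose (t+1) := by
      intro t _
      have h : k + (t+1) - 1 = k + t := by omega
      rw [h]
    rw [Finset.sum_congr rfl h1]
    simp
  have hJ : J k n
      = (∑ t ∈ range n, stirling n (t+1) * (t+1).factorial * (k+t+1).choose (t+1))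
        + stirling n 0 := by
    unfold J
    rw [Finset.sum_range_succ']
    have h1 : ∀ t ∈ range n,
        stirling n (t+1) * (t+1).factorial * (k+(t+1)).choose (t+1)
          = stirling n (t+1) * (t+1).factorial * (k+t+1).choose (t+1) := by
      intro t _
      have h : k + (t+1) = k + t + 1 := by omega
      rw [h]
    rw [Finset.sum_congr rfl h1]
    simp
  rw [hB, hP, hJ]
  have : ∀ t ∈ range n,
      stirling n (t+1) * (t+1).factorial * (k+t).choose t
        + stirling n (t+1) * (t+1).factorial * (k+t).choose (t+1)
      = stirling n (t+1) * (t+1).factorial * (k+t+1).choose (t+1) := by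
    intro t _
    rw [Nat.choose_succ_succ (k+t) t]
    ring
  rw [← add_assoc, ← Finset.sum_add_distrib, Finset.sum_congr rfl this]

lemma key (k n : ℕ) :
    (∑ m ∈ range (n+1), n.choose m * J k m) + P k n = 2 * J k n := by
  rw [swap_sum]
  have expand : ∀ s ∈ range (n+1),
      stirling (n+1) (s+1) * s.factorial * (k+s).choose s
        = stirling n (s+1) * (s+1).factorial * (k+s).choose s
          + stirling n s * s.factorial * (k+s).choose s := by
    intro s _
    show ((s+1) * stirling n (s+1) + stirling n s) * s.factorial * (k+s).choose s = _
    rw [Nat.factorial_succ]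
    ring
  rw [Finset.sum_congr rfl expand, Finset.sum_add_distrib]
  have : (∑ s ∈ range (n+1), stirling n s * s.factorial * (k+s).choose s) = J k n := rfl
  rw [this, add_right_comm, BP, two_mul]

open PowerSeries in
lemma coeff_key (k n : ℕ) :
    (coeff n) ((2 - exp ℚ) * PowerSeries.mk (fun n => (J k n : ℚ) / n.factorial))
      = (P k n : ℚ) / n.factorial := by
  have h2 : (2 : PowerSeries ℚ) = PowerSeries.C (R := ℚ) 2 := by
    simp [map_ofNat]
  rw [sub_mul, map_sub, h2, PowerSeries.coeff_C_mul, PowerSeries.coeff_mk,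
    PowerSeries.coeff_mul, Finset.Nat.sum_antidiagonal_eq_sum_range_succ_mk]
  have hterm : ∀ m ∈ range (n+1),
      (coeff m) (exp ℚ) * (coeff (n - m)) (PowerSeries.mk fun n => (J k n : ℚ) / n.factorial)
        = (n.choose m * J k (n - m) : ℕ) / n.factorial := by
    intro m hm
    rw [Finset.mem_range] at hm
    rw [PowerSeries.coeff_exp, PowerSeries.coeff_mk]
    have hfac : (n.choose m * m.factorial * (n-m).factorial : ℕ) = n.factorial :=
      Nat.choose_mul_factorial_mul_factorial (by omega)
    have hm0 : (m.factorial : ℚ) ≠ 0 := Nat.cast_ne_zero.2 (Nat.factorial_ne_zero m)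
    have hnm0 : ((n-m).factorial : ℚ) ≠ 0 := Nat.cast_ne_zero.2 (Nat.factorial_ne_zero _)
    have hn0 : (n.factorial : ℚ) ≠ 0 := Nat.cast_ne_zero.2 (Nat.factorial_ne_zero n)
    have hfacQ : (n.choose m : ℚ) * m.factorial * (n-m).factorial = n.factorial := by
      exact_mod_cast congrArg (Nat.cast : ℕ → ℚ) hfac
    simp only [Algebra.algebraMap_self, RingHom.id_apply]
    push_cast
    field_simp
    nlinarith [hfacQ]
  rw [Finset.sum_congr rfl hterm]
  have hrefl : ∑ m ∈ range (n+1), ((n.choose m * J k (n-m) : ℕ) : ℚ) / n.factorial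
      = ∑ m ∈ range (n+1), ((n.choose m * J k m : ℕ) : ℚ) / n.factorial := by
    rw [← Finset.sum_range_reflect]
    refine Finset.sum_congr rfl fun m hm => ?_
    rw [Finset.mem_range] at hm
    have h1 : n + 1 - 1 - m = n - m := by omega
    have h2 : n - (n - m) = m := by omega
    rw [h1, h2, Nat.choose_symm (by omega)]
  rw [hrefl, ← Finset.sum_div, ← Nat.cast_sum]
  have hk := key k n
  have hn0 : (n.factorial : ℚ) ≠ 0 := Nat.cast_ne_zero.2 (Nat.factorial_ne_zero n)
  have hkQ : ((∑ m ∈ range (n+1), n.choose m * J k m : ℕ) : ℚ) = 2 * J k n - P k n := by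
    have := congrArg (Nat.cast : ℕ → ℚ) hk
    push_cast at this ⊢
    linarith
  rw [hkQ]
  field_simp
  ring

open PowerSeries in
lemma mul_eq (k : ℕ) :
    (2 - exp ℚ) * PowerSeries.mk (fun n => (J k n : ℚ) / n.factorial)
      = PowerSeries.mk (fun n => (P k n : ℚ) / n.factorial) := by
  ext n
  rw [coeff_key, PowerSeries.coeff_mk]

theorem stmt_3 (k : ℕ) :
    PowerSeries.mk (fun n => (J k n : ℚ) / n.factorial) =
      ((2 - PowerSeries.exp ℚ)⁻¹) ^ (k + 1) := by
  have hc : PowerSeries.constantCoeff (2 - PowerSeries.exp ℚ) ≠ 0 := by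
    rw [map_sub, PowerSeries.constantCoeff_exp]
    simp only [map_ofNat]
    norm_num
  have hinv : (2 - PowerSeries.exp ℚ)⁻¹ * (2 - PowerSeries.exp ℚ) = 1 :=
    PowerSeries.inv_mul_cancel _ hc
  have solve : ∀ k : ℕ, PowerSeries.mk (fun n => (J k n : ℚ) / n.factorial)
      = (2 - PowerSeries.exp ℚ)⁻¹ * PowerSeries.mk (fun n => (P k n : ℚ) / n.factorial) := by
    intro k
    rw [← mul_eq, ← mul_assoc, hinv, one_mul]
  induction k with
  | zero =>
    rw [solve 0, pow_one]
    have : PowerSeries.mk (fun n => (P 0 n : ℚ) / n.factorial) = 1 := by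
      ext n
      rw [PowerSeries.coeff_mk, P_zero, PowerSeries.coeff_one]
      split <;> simp_all
    rw [this, mul_one]
  | succ k ih =>
    rw [solve (k+1)]
    have : PowerSeries.mk (fun n => (P (k+1) n : ℚ) / n.factorial)
        = PowerSeries.mk (fun n => (J k n : ℚ) / n.factorial) := by
      ext n; rw [PowerSeries.coeff_mk, PowerSeries.coeff_mk, P_succ]
    rw [this, ih, ← pow_succ']
end

section
/- For all n, k ≥ 0, J^k_n = ∑ over all (k+1)-tuples (w_1,…,w_{k+1}) of natural numbers with w_1+⋯+w_{k+1} = n of the multinomial coefficient n!/(w_1!⋯w_{k+1}!) times J^0_{w_1}·J^0_{w_2}⋯J^0_{w_{k+1}}, where J^k_n = ∑_{s=0}^{n} S(n,s)·s!·C(k+s,s). -/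
def Srj (n s : ℕ) : ℕ := stirling n s * s.factorial

lemma stirling_zero_of_lt : ∀ n s, n < s → stirling n s = 0
  | 0, _ + 1, _ => rfl
  | n + 1, s + 1, h => by
    have h1 : n < s + 1 := by omega
    have h2 : n < s := by omega
    simp [stirling, stirling_zero_of_lt n (s+1) h1, stirling_zero_of_lt n s h2]

lemma srj_zero_of_lt (n s : ℕ) (h : n < s) : Srj n s = 0 := by
  simp [Srj, stirling_zero_of_lt n s h]

lemma srj_succ (n u : ℕ) : Srj (n + 1) u = u * (Srj n u + Srj n (u - 1)) := by
  cases u with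
  | zero => simp [Srj, stirling]
  | succ v =>
    simp only [Srj, stirling, Nat.add_sub_cancel, Nat.factorial_succ]
    ring

open Finset in
lemma leibniz (A B : ℕ → ℕ) (n : ℕ) :
    ∑ i ∈ range (n + 2), (n + 1).choose i * (A i * B (n + 1 - i)) =
      ∑ i ∈ range (n + 1), n.choose i * (A (i + 1) * B (n - i)) +
        ∑ i ∈ range (n + 1), n.choose i * (A i * B (n - i + 1)) := by
  rw [Finset.sum_range_succ' (fun i => (n + 1).choose i * (A i * B (n + 1 - i)))]
  have e1 : ∀ i ∈ range (n + 1),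
      (n + 1).choose (i + 1) * (A (i + 1) * B (n + 1 - (i + 1))) =
        n.choose i * (A (i + 1) * B (n - i)) + n.choose (i + 1) * (A (i + 1) * B (n - i)) := by
    intro i hi
    have : n + 1 - (i + 1) = n - i := by omega
    rw [this, Nat.choose_succ_succ, add_mul]
  rw [Finset.sum_congr rfl e1, Finset.sum_add_distrib]
  have e2 : ∑ i ∈ range (n + 1), n.choose (i + 1) * (A (i + 1) * B (n - i)) +
      (n + 1).choose 0 * (A 0 * B (n + 1 - 0)) =
      ∑ i ∈ range (n + 1), n.choose i * (A i * B (n - i + 1)) := by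
    rw [Finset.sum_range_succ' (fun i => n.choose i * (A i * B (n - i + 1)))]
    congr 1
    · rw [Finset.sum_range_succ, Nat.choose_succ_self, zero_mul, add_zero]
      apply Finset.sum_congr rfl
      intro i hi
      simp only [Finset.mem_range] at hi
      have : n - (i + 1) + 1 = n - i := by omega
      rw [this]
    · simp
  rw [add_assoc, e2]

open Finset in
lemma vandermonde_srj (n : ℕ) : ∀ u t : ℕ,
    ∑ i ∈ range (n + 1), n.choose i * (Srj i u * Srj (n - i) t) = Srj n (u + t) := by
  induction n with
  | zero =>
    intro u t
    cases u <;> cases t <;> simp [Srj, stirling]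
  | succ n ih =>
    intro u t
    have := leibniz (fun i => Srj i u) (fun j => Srj j t) n
    rw [show n + 1 + 1 = n + 2 from rfl, this]
    have r1 : ∀ i, Srj (i + 1) u = u * (Srj i u + Srj i (u - 1)) := fun i => srj_succ i u
    have r2 : ∀ j, Srj (j + 1) t = t * (Srj j t + Srj j (t - 1)) := fun j => srj_succ j t
    simp only [r1, r2]
    have h1 : ∑ i ∈ range (n + 1), n.choose i * (u * (Srj i u + Srj i (u - 1)) * Srj (n - i) t)
        = u * (Srj n (u + t) + Srj n (u - 1 + t)) := by
      rw [← ih u t, ← ih (u - 1) t, mul_add, Finset.mul_sum, Finset.mul_sum,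
        ← Finset.sum_add_distrib]
      apply Finset.sum_congr rfl; intro i _; ring
    have h2 : ∑ i ∈ range (n + 1), n.choose i * (Srj i u * (t * (Srj (n - i) t + Srj (n - i) (t - 1))))
        = t * (Srj n (u + t) + Srj n (u + (t - 1))) := by
      rw [← ih u t, ← ih u (t - 1), mul_add, Finset.mul_sum, Finset.mul_sum,
        ← Finset.sum_add_distrib]
      apply Finset.sum_congr rfl; intro i _; ring
    rw [h1, h2, srj_succ n (u + t)]
    rcases u with _ | u <;> rcases t with _ | t <;> simp <;> ring_nf <;>
      simp [Nat.succ_sub_one, show u + 1 + (t + 1) - 1 = u + 1 + t from by omega,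
        show u + (t + 1) = u + 1 + t from by omega] <;> ring

open Finset in
lemma hockey (k s : ℕ) : (k + 1 + s).choose s = ∑ u ∈ range (s + 1), (k + u).choose u := by
  have e : ∀ u, (k + u).choose u = (k + u).choose k := by
    intro u
    rw [← Nat.choose_symm (Nat.le_add_right k u), Nat.add_sub_cancel_left]
  simp only [e]
  have : ∑ u ∈ range (s + 1), (k + u).choose k = ∑ m ∈ Icc k (k + s), m.choose k := by
    rw [← Finset.Ico_add_one_right_eq_Icc, Finset.sum_Ico_eq_sum_range,
      show k + s + 1 - k = s + 1 from by omega]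
  rw [this, Nat.sum_Icc_choose]
  have h := Nat.choose_symm (show k + 1 ≤ k + 1 + s by omega)
  rw [Nat.add_sub_cancel_left] at h
  rw [h, show k + 1 + s = k + s + 1 from by omega]

open Finset in
lemma double_sum (n k : ℕ) :
    ∑ t ∈ range (n + 1), ∑ u ∈ range (n + 1), (k + t).choose t * Srj n (t + u) =
      ∑ s ∈ range (n + 1), Srj n s * (k + 1 + s).choose s := by
  have step1 : ∀ t ∈ range (n + 1),
      ∑ u ∈ range (n + 1), (k + t).choose t * Srj n (t + u) =
        ∑ s ∈ Ico t (n + 1), (k + t).choose t * Srj n s := by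
    intro t ht
    simp only [mem_range] at ht
    rw [Finset.sum_Ico_eq_sum_range]
    have h1 : ∑ u ∈ range (n + 1), (k + t).choose t * Srj n (t + u) =
        ∑ u ∈ range (n + 1 - t), (k + t).choose t * Srj n (t + u) := by
      apply (Finset.sum_subset (by intro x; simp; omega) ?_).symm
      intro x hx hx'
      simp only [mem_range] at hx hx'
      rw [srj_zero_of_lt n (t + x) (by omega), mul_zero]
    rw [h1]
  rw [Finset.sum_congr rfl step1]
  have swap : ∑ t ∈ range (n + 1), ∑ s ∈ Ico t (n + 1), (k + t).choose t * Srj n s =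
      ∑ s ∈ range (n + 1), ∑ t ∈ range (s + 1), (k + t).choose t * Srj n s := by
    rw [Finset.range_eq_Ico, Finset.sum_Ico_Ico_comm]
    simp only [Finset.range_eq_Ico]
  rw [swap]
  apply Finset.sum_congr rfl
  intro s _
  rw [← Finset.sum_mul, mul_comm, hockey]

open Finset in
lemma J_eq (k m : ℕ) : J k m = ∑ t ∈ range (m + 1), Srj m t * (k + t).choose t := by
  unfold J Srj; rfl

open Finset in
lemma J_eq_ext (k m n : ℕ) (h : m ≤ n) :
    J k m = ∑ t ∈ range (n + 1), Srj m t * (k + t).choose t := by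
  rw [J_eq]
  apply Finset.sum_subset
  · intro x; simp; omega
  · intro x _ hx
    simp only [mem_range] at hx
    rw [srj_zero_of_lt m x (by omega), zero_mul]

open Finset in
lemma J0_eq_ext (m n : ℕ) (h : m ≤ n) : J 0 m = ∑ t ∈ range (n + 1), Srj m t := by
  rw [J_eq_ext 0 m n h]
  apply Finset.sum_congr rfl
  intro t _
  rw [zero_add, Nat.choose_self, mul_one]

open Finset in
lemma convJ (k n : ℕ) :
    J (k + 1) n = ∑ i ∈ range (n + 1), n.choose i * (J 0 i * J k (n - i)) := by
  have expand : ∀ i ∈ range (n + 1), n.choose i * (J 0 i * J k (n - i)) =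
      ∑ t ∈ range (n + 1), ∑ u ∈ range (n + 1),
        (k + t).choose t * (n.choose i * (Srj i u * Srj (n - i) t)) := by
    intro i hi
    simp only [mem_range] at hi
    rw [J0_eq_ext i n (by omega), J_eq_ext k (n - i) n (by omega), Finset.sum_mul_sum]
    rw [Finset.mul_sum, Finset.sum_comm]
    apply Finset.sum_congr rfl
    intro t _
    rw [Finset.mul_sum]
    apply Finset.sum_congr rfl
    intro u _
    ring
  rw [Finset.sum_congr rfl expand, Finset.sum_comm]
  have inner : ∀ t ∈ range (n + 1), ∑ i ∈ range (n + 1), ∑ u ∈ range (n + 1),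
      (k + t).choose t * (n.choose i * (Srj i u * Srj (n - i) t)) =
      ∑ u ∈ range (n + 1), (k + t).choose t * Srj n (t + u) := by
    intro t _
    rw [Finset.sum_comm]
    apply Finset.sum_congr rfl
    intro u _
    rw [← Finset.mul_sum, vandermonde_srj n u t, Nat.add_comm u t]
  rw [Finset.sum_congr rfl inner, double_sum, J_eq]

open Finset in
lemma multinomial_univ_cons (k a : ℕ) (v : Fin k → ℕ) :
    Nat.multinomial Finset.univ (Fin.cons a v : Fin (k + 1) → ℕ) =
      (a + ∑ i, v i).choose a * Nat.multinomial Finset.univ v := by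
  have h1 := Nat.multinomial_spec (Finset.univ : Finset (Fin (k + 1))) (Fin.cons a v)
  have h2 := Nat.multinomial_spec (Finset.univ : Finset (Fin k)) v
  have hp : ∏ i : Fin (k + 1), ((Fin.cons a v : Fin (k + 1) → ℕ) i).factorial =
      a.factorial * ∏ i : Fin k, (v i).factorial := by
    rw [Fin.prod_univ_succ]
    simp [Fin.cons_zero, Fin.cons_succ]
  have hs : ∑ i : Fin (k + 1), (Fin.cons a v : Fin (k + 1) → ℕ) i = a + ∑ i, v i := by
    rw [Fin.sum_univ_succ]
    simp [Fin.cons_zero, Fin.cons_succ]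
  apply Nat.eq_of_mul_eq_mul_left
    (show 0 < ∏ i : Fin (k + 1), ((Fin.cons a v : Fin (k + 1) → ℕ) i).factorial from
      Finset.prod_pos fun i _ => Nat.factorial_pos _)
  rw [h1, hs, hp]
  have key : (a + ∑ i, v i).choose a * a.factorial * (∑ i, v i).factorial =
      (a + ∑ i, v i).factorial := by
    have := Nat.add_choose_mul_factorial_mul_factorial (∑ i, v i) a
    rw [Nat.add_comm (∑ i, v i) a] at this
    rw [mul_right_comm] at this
    exact this
  symm
  calc a.factorial * (∏ i : Fin k, (v i).factorial) *
        ((a + ∑ i, v i).choose a * Nat.multinomial Finset.univ v)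
      = (a + ∑ i, v i).choose a * a.factorial *
          ((∏ i : Fin k, (v i).factorial) * Nat.multinomial Finset.univ v) := by ring
    _ = (a + ∑ i, v i).choose a * a.factorial * (∑ i, v i).factorial := by rw [h2]
    _ = (a + ∑ i, v i).factorial := key

open Finset in
lemma sum_adt_succ {M : Type*} [AddCommMonoid M] (k n : ℕ) (F : (Fin (k + 1) → ℕ) → M) :
    ∑ w ∈ Finset.Nat.antidiagonalTuple (k + 1) n, F w =
      ∑ p ∈ Finset.HasAntidiagonal.antidiagonal n, ∑ v ∈ Finset.Nat.antidiagonalTuple k p.2,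
        F (Fin.cons p.1 v) := by
  rw [Finset.sum_sigma']
  refine Finset.sum_nbij'
    (i := fun w => (⟨(w 0, ∑ i, Fin.tail w i), Fin.tail w⟩ : Σ _p : ℕ × ℕ, Fin k → ℕ))
    (j := fun x => Fin.cons x.1.1 x.2)
    ?_ ?_ ?_ ?_ ?_
  · intro w hw
    rw [Finset.Nat.mem_antidiagonalTuple] at hw
    refine Finset.mem_sigma.mpr ⟨Finset.HasAntidiagonal.mem_antidiagonal.mpr ?_,
      Finset.Nat.mem_antidiagonalTuple.mpr rfl⟩
    rw [← hw, Fin.sum_univ_succ]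
    rfl
  · rintro ⟨⟨a, b⟩, v⟩ h
    rw [Finset.mem_sigma] at h
    obtain ⟨h1, h2⟩ := h
    rw [Finset.HasAntidiagonal.mem_antidiagonal] at h1
    rw [Finset.Nat.mem_antidiagonalTuple] at h2 ⊢
    rw [Fin.sum_univ_succ]
    simp only [Fin.cons_zero, Fin.cons_succ]
    exact h1 ▸ (by rw [h2] : (a : ℕ) + ∑ i : Fin k, v i = a + b)
  · intro w _
    exact Fin.cons_self_tail w
  · rintro ⟨⟨a, b⟩, v⟩ h
    rw [Finset.mem_sigma] at h
    obtain ⟨h1, h2⟩ := h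
    rw [Finset.Nat.mem_antidiagonalTuple] at h2
    simp [Fin.tail_cons, Fin.cons_zero, h2]
  · intro w _
    simp [Fin.cons_self_tail]

theorem stmt_16 (n k : ℕ) :
    J k n = ∑ w ∈ Finset.Nat.antidiagonalTuple (k + 1) n,
      Nat.multinomial Finset.univ w * ∏ i : Fin (k + 1), J 0 (w i) := by
  induction k generalizing n with
  | zero =>
    rw [Finset.Nat.antidiagonalTuple_one, Finset.sum_singleton]
    simp [Fin.prod_univ_one]
  | succ k ih =>
    rw [sum_adt_succ]
    have inner : ∀ p ∈ Finset.HasAntidiagonal.antidiagonal n,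
        (∑ v ∈ Finset.Nat.antidiagonalTuple (k + 1) p.2,
          Nat.multinomial Finset.univ (Fin.cons p.1 v : Fin (k + 2) → ℕ) *
            ∏ i : Fin (k + 2), J 0 ((Fin.cons p.1 v : Fin (k + 2) → ℕ) i)) =
        n.choose p.1 * (J 0 p.1 * J k p.2) := by
      rintro ⟨a, b⟩ hp
      rw [Finset.HasAntidiagonal.mem_antidiagonal] at hp
      have term : ∀ v ∈ Finset.Nat.antidiagonalTuple (k + 1) b,
          Nat.multinomial Finset.univ (Fin.cons a v : Fin (k + 2) → ℕ) *
            ∏ i : Fin (k + 2), J 0 ((Fin.cons a v : Fin (k + 2) → ℕ) i) =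
          n.choose a * (J 0 a *
            (Nat.multinomial Finset.univ v * ∏ i : Fin (k + 1), J 0 (v i))) := by
        intro v hv
        rw [Finset.Nat.mem_antidiagonalTuple] at hv
        rw [multinomial_univ_cons, hv, hp, Fin.prod_univ_succ]
        simp only [Fin.cons_zero, Fin.cons_succ]
        ring
      rw [Finset.sum_congr rfl term, ← Finset.mul_sum, ← Finset.mul_sum, ← ih b]
    rw [Finset.sum_congr rfl inner, Finset.Nat.sum_antidiagonal_eq_sum_range_succ
      (fun i j => n.choose i * (J 0 i * J k j)), ← convJ]
end
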